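/- Let G₁ and G₂ be connected finite simple graphs on vertex sets {1,…,k₁} and {1,…,k₂} (k₂ ≥ 2) with Laplacian matrices L₁ and L₂, and let s₁ ∈ {1,…,k₁}, s₂ ∈ {1,…,k₂}. Suppose every eigenvector of L₁ has a nonzero s₁-th entry and every eigenvector of L₂ has a nonzero s₂-th entry. Let L = I_{k₁} ⊗ L₂ + L₁ ⊗ (e_{s₂} e_{s₂}ᵀ) be the composite matrix. Then for every eigenvalue λ of L, the (k₂−1)×(k₂−1) matrix obtained from L₂ − λI by deleting its s₂-th row and s₂-th column is invertible. -/

import Mathlib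

/-- The composite matrix `L = I_{k₁} ⊗ L₂ + L₁ ⊗ (e_s e_sᵀ)`, indexed by pairs. -/
def composite {k₁ k₂ : ℕ} (L₁ : Matrix (Fin k₁) (Fin k₁) ℝ) (L₂ : Matrix (Fin k₂) (Fin k₂) ℝ)
    (s : Fin k₂) : Matrix (Fin k₁ × Fin k₂) (Fin k₁ × Fin k₂) ℝ :=
  Matrix.of fun p q =>
    (if p.1 = q.1 then L₂ p.2 q.2 else 0) +
    L₁ p.1 q.1 * ((if p.2 = s then (1 : ℝ) else 0) * (if q.2 = s then (1 : ℝ) else 0))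

theorem stmt_2 (k₁ k₂ : ℕ) (hk₂ : 2 ≤ k₂)
    (G₁ : SimpleGraph (Fin k₁)) [DecidableRel G₁.Adj] (hG₁ : G₁.Connected)
    (G₂ : SimpleGraph (Fin k₂)) [DecidableRel G₂.Adj] (hG₂ : G₂.Connected)
    (s₁ : Fin k₁) (s₂ : Fin k₂)
    (h₁ : ∀ v : Fin k₁ → ℝ, v ≠ 0 → (∃ μ : ℝ, (G₁.lapMatrix ℝ).mulVec v = μ • v) → v s₁ ≠ 0)
    (h₂ : ∀ v : Fin k₂ → ℝ, v ≠ 0 → (∃ μ : ℝ, (G₂.lapMatrix ℝ).mulVec v = μ • v) → v s₂ ≠ 0)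
    (lam : ℝ)
    (hlam : ∃ w : Fin k₁ × Fin k₂ → ℝ, w ≠ 0 ∧
      (composite (G₁.lapMatrix ℝ) (G₂.lapMatrix ℝ) s₂).mulVec w = lam • w) :
    IsUnit (Matrix.of fun a b : {a : Fin k₂ // a ≠ s₂} =>
      (G₂.lapMatrix ℝ - lam • (1 : Matrix (Fin k₂) (Fin k₂) ℝ)) a.val b.val) := by
  classical
  set L₁ := G₁.lapMatrix ℝ with hL₁
  set L₂ := G₂.lapMatrix ℝ with hL₂
  set A : Matrix (Fin k₂) (Fin k₂) ℝ := L₂ - lam • 1 with hA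
  -- key: A.mulVec y = 0 ↔ y is a lam-eigenvector equation
  have hAeig : ∀ y : Fin k₂ → ℝ, A.mulVec y = 0 ↔ L₂.mulVec y = lam • y := by
    intro y
    rw [hA, Matrix.sub_mulVec, Matrix.smul_mulVec, Matrix.one_mulVec, sub_eq_zero]
  by_contra hunit
  have hdet : (Matrix.of fun a b : {a : Fin k₂ // a ≠ s₂} => A a.val b.val).det = 0 := by
    by_contra h
    exact hunit ((Matrix.isUnit_iff_isUnit_det _).mpr (isUnit_iff_ne_zero.mpr h))
  obtain ⟨u, hu0, huker⟩ := Matrix.exists_mulVec_eq_zero_iff.mpr hdet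
  set v : Fin k₂ → ℝ := fun b => if h : b = s₂ then 0 else u ⟨b, h⟩ with hv
  have hvs : v s₂ = 0 := by simp [hv]
  have hvne : v ≠ 0 := by
    obtain ⟨a, ha⟩ := Function.ne_iff.mp hu0
    intro h
    apply ha
    have := congrFun h a.val
    simpa [hv, a.prop] using this
  have sum_eq : ∀ f : Fin k₂ → ℝ, f s₂ = 0 →
      ∑ b, f b = ∑ x : {b : Fin k₂ // b ≠ s₂}, f x.val := by
    intro f hf
    rw [← Finset.add_sum_erase Finset.univ f (Finset.mem_univ s₂), hf, zero_add,
      Finset.sum_subtype (p := fun b => b ≠ s₂) (Finset.univ.erase s₂)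
        (fun x => by simp [Finset.mem_erase]) f]
  set c := A.mulVec v s₂ with hc
  have hAv : ∀ a, A.mulVec v a = if a = s₂ then c else 0 := by
    intro a
    by_cases ha : a = s₂
    · simp [ha, hc]
    · rw [if_neg ha]
      have h1 : A.mulVec v a = ∑ x : {b : Fin k₂ // b ≠ s₂}, A a x.val * u x := by
        show ∑ b, A a b * v b = _
        rw [sum_eq (fun b => A a b * v b) (by simp [hvs])]
        congr 1
        ext x
        simp [hv, x.prop]
      have h2 := congrFun huker ⟨a, ha⟩
      rw [h1]
      simpa [Matrix.mulVec, dotProduct] using h2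
  by_cases hc0 : c = 0
  · -- then v is an eigenvector of L₂ with v s₂ = 0, contradiction
    have : A.mulVec v = 0 := by
      funext a; rw [hAv a, hc0]; simp
    exact h₂ v hvne ⟨lam, (hAeig v).mp this⟩ hvs
  by_cases heig : ∃ y : Fin k₂ → ℝ, y ≠ 0 ∧ A.mulVec y = 0
  · -- symmetry argument: c must be 0
    obtain ⟨y, hy0, hyker⟩ := heig
    have hys : y s₂ ≠ 0 := h₂ y hy0 ⟨lam, (hAeig y).mp hyker⟩
    have hsym : A.transpose = A := by
      rw [hA]
      simp [Matrix.transpose_sub, Matrix.transpose_smul, hL₂, (G₂.isSymm_lapMatrix (R := ℝ)).eq]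
    have hdot : dotProduct y (A.mulVec v) = 0 := by
      rw [Matrix.dotProduct_mulVec, ← hsym, Matrix.vecMul_transpose, hyker]
      simp
    have : y s₂ * c = 0 := by
      rw [← hdot]
      have : dotProduct y (A.mulVec v) = ∑ b, y b * (if b = s₂ then c else 0) := by
        congr 1; funext b; rw [hAv b]
      rw [this]
      simp [Finset.sum_ite_eq', mul_comm]
    exact hc0 ((mul_eq_zero.mp this).resolve_left hys)
  · -- A has trivial kernel, hence injective; use composite eigenvector
    push_neg at heig
    have hinj : ∀ y : Fin k₂ → ℝ, A.mulVec y = 0 → y = 0 := by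
      intro y hy
      by_contra h
      exact heig y h hy
    obtain ⟨w, hw0, hweq⟩ := hlam
    set x : Fin k₁ → ℝ := fun i => w (i, s₂) with hx
    have comp_apply : ∀ (i : Fin k₁) (a : Fin k₂),
        (composite L₁ L₂ s₂).mulVec w (i, a) =
          L₂.mulVec (fun b => w (i, b)) a + (if a = s₂ then (1:ℝ) else 0) * L₁.mulVec x i := by
      intro i a
      show ∑ q : Fin k₁ × Fin k₂, composite L₁ L₂ s₂ (i, a) q * w q = _
      rw [Fintype.sum_prod_type]
      simp only [composite, Matrix.of_apply, add_mul]
      rw [Finset.sum_congr rfl (fun j _ => Finset.sum_add_distrib), Finset.sum_add_distrib]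
      congr 1
      · show _ = ∑ b, L₂ a b * w (i, b)
        rw [Finset.sum_comm]
        refine Finset.sum_congr rfl fun b _ => ?_
        simp [ite_mul, Finset.sum_ite_eq]
      · show _ = (if a = s₂ then (1:ℝ) else 0) * ∑ j, L₁ i j * w (j, s₂)
        rw [Finset.mul_sum]
        refine Finset.sum_congr rfl fun j _ => ?_
        have hterm : ∀ b, L₁ i j * ((if a = s₂ then (1:ℝ) else 0) * (if b = s₂ then (1:ℝ) else 0)) * w (j, b)
            = if b = s₂ then (if a = s₂ then (1:ℝ) else 0) * (L₁ i j * w (j, b)) else 0 := fun b => by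
          by_cases hb : b = s₂ <;> simp [hb] <;> ring
        rw [Finset.sum_congr rfl (fun b _ => hterm b), Finset.sum_ite_eq' Finset.univ s₂]
        simp
    have key : ∀ i, A.mulVec (fun b => w (i, b)) =
        fun a => -((if a = s₂ then (1:ℝ) else 0) * L₁.mulVec x i) := by
      intro i
      funext a
      have h := congrFun hweq (i, a)
      rw [comp_apply i a] at h
      have h2 : A.mulVec (fun b => w (i, b)) a
          = L₂.mulVec (fun b => w (i, b)) a - lam * w (i, a) := by
        rw [hA, Matrix.sub_mulVec, Matrix.smul_mulVec, Matrix.one_mulVec]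
        rfl
      have h3 : (lam • w) (i, a) = lam * w (i, a) := rfl
      rw [h3] at h
      rw [h2]
      linarith
    have hzero : ∀ i, (fun b => w (i, b)) + (L₁.mulVec x i * c⁻¹) • v = 0 := by
      intro i
      apply hinj
      rw [Matrix.mulVec_add, Matrix.mulVec_smul, key i]
      funext a
      have := hAv a
      by_cases ha : a = s₂
      · simp [ha, this, hAv, mul_assoc, inv_mul_cancel₀ hc0]
      · simp [ha, this, hAv]
    have hx0 : ∀ i, x i = 0 := by
      intro i
      have := congrFun (hzero i) s₂
      simpa [hvs, hx] using this
    apply hw0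
    funext p
    have := congrFun (hzero p.1) p.2
    have hL1x : L₁.mulVec x = 0 := by
      have : x = 0 := funext hx0
      rw [this, Matrix.mulVec_zero]
    have hwi : (fun b => w (p.1, b)) = 0 := by
      apply hinj
      rw [key p.1]
      funext a
      simp [hL1x]
    exact congrFun hwi p.2
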